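/- Let k be a field, let a, b ≥ 1 be integers, let W_m denote the k-vector space of homogeneous polynomials of degree m in two variables s, t, and let φ : W_{a+b} → k be a nonzero k-linear functional. Then the (a+1) × (b+1) Hankel matrix M(φ) with entries M(φ)_{i,j} = φ(s^{a+b-i-j} t^{i+j}) has rank 1 if and only if φ is a nonzero scalar multiple of an evaluation functional: there exist (s_0, t_0) ∈ k² with (s_0, t_0) ≠ (0,0) and c ∈ k with c ≠ 0 such that φ(A) = c · A(s_0, t_0) for all A ∈ W_{a+b}, equivalently φ(s^{a+b-j} t^j) = c · s_0^{a+b-j} t_0^{j} for all 0 ≤ j ≤ a+b. (In projective terms, the rank-one locus of the Hankel matrix in P(W_{a+b})^* is the rational normal curve consisting of the hyperplanes { A ∈ W_{a+b} : A(p) = 0 } for p ∈ P¹.) -/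

import Mathlib

open MvPolynomial

noncomputable section

/-- The monomial `s^(m-j) * t^j` is homogeneous of degree `m` when `j ≤ m`. -/
lemma monomial_mem_homog (k : Type*) [Field k] (m j : ℕ) (hj : j ≤ m) :
    (X 0 ^ (m - j) * X 1 ^ j : MvPolynomial (Fin 2) k) ∈
      homogeneousSubmodule (Fin 2) k m := by
  rw [mem_homogeneousSubmodule]
  have h := ((isHomogeneous_X (R := k) (0 : Fin 2)).pow (m - j)).mul
    ((isHomogeneous_X (R := k) (1 : Fin 2)).pow j)
  simpa only [one_mul, Nat.sub_add_cancel hj] using h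

/-- A linear functional on binary forms of degree `n` vanishing on all monomials
`s^(n-m) t^m` is zero. -/
lemma homog_ext {k : Type*} [Field k] {n : ℕ}
    (ψ : homogeneousSubmodule (Fin 2) k n →ₗ[k] k)
    (h : ∀ m (hm : m ≤ n),
      ψ ⟨X 0 ^ (n - m) * X 1 ^ m, monomial_mem_homog k n m hm⟩ = 0) :
    ψ = 0 := by
  ext A
  obtain ⟨P, hP⟩ := A
  have hdeg : ∀ d ∈ P.support, d 0 + d 1 = n := by
    intro d hd
    have h1 := hP (mem_support_iff.1 hd)
    rw [Pi.one_def, ← Finsupp.degree_eq_weight_one] at h1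
    rw [← h1]
    show d 0 + d 1 = ∑ i ∈ d.support, d i
    rw [Finset.sum_subset (Finset.subset_univ d.support)
      (by intro x _ hx; exact Finsupp.notMem_support_iff.1 hx)]
    exact (Fin.sum_univ_two d).symm
  have hmono : ∀ d ∈ P.support,
      (monomial d (coeff d P) : MvPolynomial (Fin 2) k)
        = coeff d P • (X 0 ^ (n - d 1) * X 1 ^ (d 1)) := by
    intro d hd
    have h01 := hdeg d hd
    have he : n - d 1 = d 0 := by omega
    rw [he, monomial_eq, Finsupp.prod, smul_eq_C_mul]
    congr 1
    rw [Finset.prod_subset (Finset.subset_univ d.support)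
      (by intro x _ hx; rw [Finsupp.notMem_support_iff.1 hx, pow_zero]),
      Fin.prod_univ_two]
  have hrepr : (⟨P, hP⟩ : homogeneousSubmodule (Fin 2) k n)
      = ∑ d ∈ P.support.attach,
          coeff d.1 P • (⟨X 0 ^ (n - d.1 1) * X 1 ^ (d.1 1),
            monomial_mem_homog k n (d.1 1) (by have := hdeg d.1 d.2; omega)⟩ :
            homogeneousSubmodule (Fin 2) k n) := by
    apply Subtype.ext
    push_cast
    rw [Finset.sum_attach P.support
      (fun d => coeff d P • (X 0 ^ (n - d 1) * X 1 ^ (d 1) : MvPolynomial (Fin 2) k))]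
    exact ((Finset.sum_congr rfl (fun d hd => (hmono d hd).symm)).trans
      (support_sum_monomial_coeff P)).symm
  rw [hrepr, map_sum]
  simp only [map_smul]
  rw [LinearMap.zero_apply]
  apply Finset.sum_eq_zero
  intro d _
  rw [h (d.1 1) (by have := hdeg d.1 d.2; omega), smul_zero]

lemma rank_le_one_of_outer {k : Type*} [Field k] {m n : ℕ}
    (M : Matrix (Fin m) (Fin n) k) (u : Fin m → k) (v : Fin n → k)
    (h : ∀ i j, M i j = u i * v j) : M.rank ≤ 1 := by
  have hM : M = Matrix.replicateCol Unit u * Matrix.replicateRow Unit v := by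
    ext i j
    simp [Matrix.mul_apply, h]
  rw [hM]
  exact (Matrix.rank_mul_le_left _ _).trans
    ((Matrix.rank_le_card_width _).trans (by simp))

lemma eq_zero_of_rank_zero {k : Type*} [Field k] {m n : ℕ}
    (M : Matrix (Fin m) (Fin n) k) (h : M.rank = 0) : M = 0 := by
  rw [Matrix.rank_eq_finrank_span_cols] at h
  have hsp := Submodule.finrank_eq_zero.mp h
  ext i j
  have hmem : M.col j ∈ Submodule.span k (Set.range M.col) :=
    Submodule.subset_span ⟨j, rfl⟩
  rw [hsp, Submodule.mem_bot] at hmem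
  have : M.col j i = 0 := by rw [hmem]; rfl
  simpa using this

lemma outer_of_rank_one {k : Type*} [Field k] {m n : ℕ}
    (M : Matrix (Fin m) (Fin n) k) (h : M.rank = 1) :
    ∃ (u : Fin m → k) (v : Fin n → k), ∀ i j, M i j = u i * v j := by
  rw [Matrix.rank_eq_finrank_span_cols] at h
  obtain ⟨w, -, hw⟩ := finrank_eq_one_iff'.mp h
  choose v hv using fun j => hw ⟨M.transpose j, Submodule.subset_span ⟨j, rfl⟩⟩
  refine ⟨fun i => (w : Fin m → k) i, v, fun i j => ?_⟩
  have h2 := congrArg Subtype.val (hv j)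
  have h3 := congrFun h2 i
  simp only [Submodule.coe_smul, Pi.smul_apply, smul_eq_mul] at h3
  rw [show M i j = M.transpose j i from rfl, ← h3, mul_comm]

/-- Let `k` be a field, `a, b ≥ 1`, `W_m` the space of binary forms
of degree `m` in `s = X 0`, `t = X 1`, and `φ : W_{a+b} → k` a nonzero linear
functional.  The `(a+1) × (b+1)` Hankel matrix `M(φ)`, with entries
`M(φ)_{i,j} = φ(s^{a+b-i-j} t^{i+j})`, has rank 1 if and only if `φ` is a
nonzero scalar multiple of an evaluation functional: there are `(s₀, t₀) ≠ (0,0)`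
and `c ≠ 0` with `φ(A) = c · A(s₀, t₀)` for all `A ∈ W_{a+b}`. -/
theorem stmt2 {k : Type*} [Field k] (a b : ℕ) (ha : 1 ≤ a) (hb : 1 ≤ b)
    (φ : homogeneousSubmodule (Fin 2) k (a + b) →ₗ[k] k) (hφ : φ ≠ 0)
    (M : Matrix (Fin (a + 1)) (Fin (b + 1)) k)
    (hM : ∀ (i : Fin (a + 1)) (j : Fin (b + 1)), M i j =
      φ ⟨X 0 ^ (a + b - ((i : ℕ) + (j : ℕ))) * X 1 ^ ((i : ℕ) + (j : ℕ)),
        monomial_mem_homog k (a + b) ((i : ℕ) + (j : ℕ))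
          (by have hi := i.isLt; have hj := j.isLt; omega)⟩) :
    M.rank = 1 ↔ ∃ (s₀ t₀ c : k), ¬(s₀ = 0 ∧ t₀ = 0) ∧ c ≠ 0 ∧
      ∀ A : homogeneousSubmodule (Fin 2) k (a + b),
        φ A = c * MvPolynomial.eval ![s₀, t₀] (A : MvPolynomial (Fin 2) k) := by
  classical
  set y : ℕ → k := fun m =>
    if h : m ≤ a + b then
      φ ⟨X 0 ^ (a + b - m) * X 1 ^ m, monomial_mem_homog k (a + b) m h⟩
    else 0 with hydef
  have hy : ∀ m (h : m ≤ a + b), y m =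
      φ ⟨X 0 ^ (a + b - m) * X 1 ^ m, monomial_mem_homog k (a + b) m h⟩ := by
    intro m h
    simp only [hydef, dif_pos h]
  have hMy : ∀ (i : Fin (a + 1)) (j : Fin (b + 1)),
      M i j = y ((i : ℕ) + (j : ℕ)) := by
    intro i j
    rw [hM i j, hy _ (by have := i.isLt; have := j.isLt; omega)]
  -- the bridge from values on monomials to values on all forms
  have bridge : ∀ s₀ t₀ c : k,
      (∀ m, m ≤ a + b → y m = c * (s₀ ^ (a + b - m) * t₀ ^ m)) →
      ∀ A : homogeneousSubmodule (Fin 2) k (a + b),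
        φ A = c * MvPolynomial.eval ![s₀, t₀] (A : MvPolynomial (Fin 2) k) := by
    intro s₀ t₀ c hval A
    let E : homogeneousSubmodule (Fin 2) k (a + b) →ₗ[k] k :=
      { toFun := fun B => c * MvPolynomial.eval ![s₀, t₀] (B : MvPolynomial (Fin 2) k)
        map_add' := by
          intro x z
          push_cast
          rw [map_add]
          ring
        map_smul' := by
          intro r x
          push_cast
          rw [MvPolynomial.smul_eval]
          simp only [RingHom.id_apply, smul_eq_mul, id_eq]
          ring }
    have hsub : φ - E = 0 := by
      apply homog_ext
      intro m hm
      simp only [LinearMap.sub_apply, E, LinearMap.coe_mk, AddHom.coe_mk]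
      rw [← hy m hm, hval m hm]
      simp [sub_eq_zero]
    have := sub_eq_zero.mp hsub
    rw [this]
    rfl
  constructor
  · -- rank 1 → evaluation functional
    intro hrank
    have hM0 : M ≠ 0 := by
      intro h0
      rw [h0, Matrix.rank_zero] at hrank
      omega
    obtain ⟨u, v, huv⟩ := outer_of_rank_one M hrank
    set u' : ℕ → k := fun i => if h : i ≤ a then u ⟨i, by omega⟩ else 0 with hu'def
    set v' : ℕ → k := fun j => if h : j ≤ b then v ⟨j, by omega⟩ else 0 with hv'def
    have hyuv : ∀ i j, i ≤ a → j ≤ b → y (i + j) = u' i * v' j := by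
      intro i j hi hj
      rw [← hMy ⟨i, by omega⟩ ⟨j, by omega⟩, huv]
      simp only [hu'def, hv'def, dif_pos hi, dif_pos hj]
    have hR : ∀ p, p + 2 ≤ a + b → y p * y (p + 2) = y (p + 1) * y (p + 1) := by
      intro p hp
      obtain ⟨i, j, hi, hj, hij⟩ : ∃ i j, i + 1 ≤ a ∧ j + 1 ≤ b ∧ i + j = p :=
        ⟨min p (a - 1), p - min p (a - 1), by omega, by omega, by omega⟩
      subst hij
      have e0 := hyuv i j (by omega) (by omega)
      have e2 : y (i + j + 2) = u' (i + 1) * v' (j + 1) := by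
        rw [show i + j + 2 = (i + 1) + (j + 1) from by omega]
        exact hyuv (i + 1) (j + 1) (by omega) (by omega)
      have e1a : y (i + j + 1) = u' (i + 1) * v' j := by
        rw [show i + j + 1 = (i + 1) + j from by omega]
        exact hyuv (i + 1) j (by omega) (by omega)
      have e1b : y (i + j + 1) = u' i * v' (j + 1) := by
        rw [show i + j + 1 = i + (j + 1) from by omega]
        exact hyuv i (j + 1) (by omega) (by omega)
      rw [e0, e2]
      nth_rewrite 1 [e1a]
      rw [e1b]
      ring
    have step : ∀ m, 1 ≤ m → m + 1 ≤ a + b → y m ≠ 0 →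
        y (m - 1) ≠ 0 ∧ y (m + 1) ≠ 0 := by
      intro m h1 h2 hm
      have hr := hR (m - 1) (by omega)
      rw [show m - 1 + 2 = m + 1 from by omega, show m - 1 + 1 = m from by omega] at hr
      have hmm : y m * y m ≠ 0 := mul_ne_zero hm hm
      exact ⟨fun h0 => hmm (by rw [← hr, h0, zero_mul]),
             fun h0 => hmm (by rw [← hr, h0, mul_zero])⟩
    have hsome : ∃ m, m ≤ a + b ∧ y m ≠ 0 := by
      have hex : ∃ i j, M i j ≠ 0 := by
        by_contra hcon
        push_neg at hcon
        exact hM0 (by ext i j; simpa using hcon i j)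
      obtain ⟨i, j, hij⟩ := hex
      refine ⟨(i : ℕ) + (j : ℕ), by have := i.isLt; have := j.isLt; omega, ?_⟩
      rw [← hMy i j]
      exact hij
    by_cases hmid : ∀ m, 1 ≤ m → m + 1 ≤ a + b → y m = 0
    · -- all middle values vanish
      by_cases h0 : y 0 = 0
      · obtain ⟨m, hm, hym⟩ := hsome
        have hmn : m = a + b := by
          by_contra hne
          rcases Nat.eq_zero_or_pos m with h | h
          · exact hym (h ▸ h0)
          · exact hym (hmid m h (by omega))
        refine ⟨0, 1, y (a + b), by simp, hmn ▸ hym, bridge 0 1 _ ?_⟩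
        intro m' hm'
        by_cases he : m' = a + b
        · subst he
          simp
        · have hz : y m' = 0 := by
            rcases Nat.eq_zero_or_pos m' with h | h
            · rw [h]; exact h0
            · exact hmid m' h (by omega)
          rw [hz, zero_pow (by omega : a + b - m' ≠ 0)]
          ring
      · -- y 0 ≠ 0 forces y (a+b) = 0
        have hn0 : y (a + b) = 0 := by
          by_contra hnn
          have e0 := hyuv 0 0 (by omega) (by omega)
          have en := hyuv a b le_rfl le_rfl
          have ea := hyuv a 0 le_rfl (by omega)
          have hza : y (a + 0) = 0 := by
            rw [Nat.add_zero]
            exact hmid a ha (by omega)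
          rw [ea] at hza
          rcases mul_eq_zero.mp hza with h | h
          · exact hnn (by rw [en, h, zero_mul])
          · exact h0 (by rw [e0, h, mul_zero])
        refine ⟨1, 0, y 0, by simp, h0, bridge 1 0 _ ?_⟩
        intro m' hm'
        rcases Nat.eq_zero_or_pos m' with h | h
        · subst h
          simp
        · have hz : y m' = 0 := by
            by_cases he : m' = a + b
            · rw [he]; exact hn0
            · exact hmid m' h (by omega)
          rw [hz, zero_pow (by omega : m' ≠ 0)]
          ring
    · -- some interior value is nonzero: all values are nonzero
      push_neg at hmid
      obtain ⟨m₁, hm1a, hm1b, hm1⟩ := hmid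
      have hall : ∀ m, m ≤ a + b → y m ≠ 0 := by
        have key : ∀ t, ∀ l, l ≤ a + b → m₁ - t ≤ l → l ≤ m₁ + t → y l ≠ 0 := by
          intro t
          induction t with
          | zero =>
            intro l hl h1 h2
            have : l = m₁ := by omega
            rw [this]
            exact hm1
          | succ t ih =>
            intro l hl h1 h2
            by_cases hin : m₁ - t ≤ l ∧ l ≤ m₁ + t
            · exact ih l hl hin.1 hin.2
            · rcases (by omega : l + 1 = m₁ - t ∨ l = m₁ + t + 1) with h | h
              · have hnext : y (l + 1) ≠ 0 := ih (l + 1) (by omega) (by omega) (by omega)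
                have hs := (step (l + 1) (by omega) (by omega) hnext).1
                simpa [show l + 1 - 1 = l from by omega] using hs
              · have hprev : y (l - 1) ≠ 0 := ih (l - 1) (by omega) (by omega) (by omega)
                have hs := (step (l - 1) (by omega) (by omega) hprev).2
                simpa [show l - 1 + 1 = l from by omega] using hs
        intro m hm
        exact key (a + b) m hm (by omega) (by omega)
      have hy0 := hall 0 (by omega)
      have hyn := hall (a + b) le_rfl
      have e00 := hyuv 0 0 (by omega) (by omega)
      have eab := hyuv a b le_rfl le_rfl
      rw [show (0 : ℕ) + 0 = 0 from rfl] at e00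
      rw [e00] at hy0
      rw [eab] at hyn
      have hu0 : u' 0 ≠ 0 := left_ne_zero_of_mul hy0
      have hv0 : v' 0 ≠ 0 := right_ne_zero_of_mul hy0
      have hua : u' a ≠ 0 := left_ne_zero_of_mul hyn
      set ρ : k := v' 1 / v' 0 with hρdef
      have hrel : ∀ i j, i + 1 ≤ a → j + 1 ≤ b →
          u' (i + 1) * v' j = u' i * v' (j + 1) := by
        intro i j hi hj
        rw [← hyuv (i + 1) j (by omega) (by omega),
          show (i + 1) + j = i + (j + 1) from by omega,
          hyuv i (j + 1) (by omega) (by omega)]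
      have hu : ∀ i, i ≤ a → u' i = u' 0 * ρ ^ i := by
        intro i
        induction i with
        | zero => intro _; simp
        | succ i ih =>
          intro hi
          have h1 := hrel i 0 (by omega) hb
          have h2 : u' (i + 1) = u' i * ρ := by
            have h1' : u' (i + 1) * v' 0 = u' i * v' 1 := by simpa using h1
            rw [hρdef, ← mul_div_assoc, eq_div_iff hv0]
            exact h1'
          rw [h2, ih (by omega), pow_succ]
          ring
      have hv : ∀ j, j ≤ b → v' j = v' 0 * ρ ^ j := by
        intro j
        induction j with
        | zero => intro _; simp
        | succ j ih =>
          intro hj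
          have h1 := hrel 0 j ha (by omega)
          have hu1 : u' 1 = u' 0 * ρ := by simpa using hu 1 ha
          have h2 : v' (j + 1) = v' j * ρ := by
            have h3 : u' 0 * v' (j + 1) = u' 0 * (v' j * ρ) := by
              rw [← h1, hu1]
              ring
            exact mul_left_cancel₀ hu0 h3
          rw [h2, ih (by omega), pow_succ]
          ring
      have hρ : ρ ≠ 0 := by
        intro h
        have := hu a le_rfl
        rw [h, zero_pow (by omega : a ≠ 0), mul_zero] at this
        exact hua this
      refine ⟨1, ρ, y 0, by simp, hall 0 (by omega), bridge 1 ρ _ ?_⟩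
      intro m hm
      set i := min m a with hidef
      set j := m - i with hjdef
      have e := hyuv i j (by omega) (by omega)
      rw [one_pow, one_mul]
      rw [show m = i + j from by omega, e, hu i (by omega), hv j (by omega),
        e00, pow_add]
      ring
  · -- evaluation functional → rank 1
    rintro ⟨s₀, t₀, c, hst, hc, hev⟩
    have hval : ∀ m, m ≤ a + b → y m = c * (s₀ ^ (a + b - m) * t₀ ^ m) := by
      intro m hm
      rw [hy m hm, hev _]
      simp
    have h1 : M.rank ≤ 1 := by
      apply rank_le_one_of_outer M
        (fun i => c * (s₀ ^ (a - (i : ℕ)) * t₀ ^ (i : ℕ)))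
        (fun j => s₀ ^ (b - (j : ℕ)) * t₀ ^ (j : ℕ))
      intro i j
      rw [hMy i j, hval _ (by have := i.isLt; have := j.isLt; omega)]
      have e1 : a + b - ((i : ℕ) + (j : ℕ)) = (a - (i : ℕ)) + (b - (j : ℕ)) := by
        have := i.isLt; have := j.isLt; omega
      rw [e1, pow_add, pow_add]
      ring
    have h2 : M ≠ 0 := by
      intro h0
      by_cases hs : s₀ = 0
      · have ht : t₀ ≠ 0 := fun h => hst ⟨hs, h⟩
        have := hMy ⟨a, by omega⟩ ⟨b, by omega⟩
        rw [h0] at this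
        simp only [Matrix.zero_apply] at this
        rw [hval (a + b) le_rfl, Nat.sub_self, pow_zero, one_mul] at this
        exact (mul_ne_zero hc (pow_ne_zero _ ht)) this.symm
      · have := hMy 0 0
        rw [h0] at this
        simp only [Matrix.zero_apply, Fin.val_zero, Nat.add_zero] at this
        rw [hval 0 (by omega), Nat.sub_zero, pow_zero, mul_one] at this
        exact (mul_ne_zero hc (pow_ne_zero _ hs)) this.symm
    have h3 : M.rank ≠ 0 := fun h => h2 (eq_zero_of_rank_zero M h)
    omega
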